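/- arXiv:2405.04844 — 2 statements merged into one kernel-verified Lean document; each statement's English description precedes it below -/
import Mathlib

section
/- Let V be a finite set, r : V → ℝ, and let c ≤ k ≤ |V| be natural numbers. Suppose T* ⊆ V is a top-k set for r (i.e. |T*| = k and r(w) ≤ r(v) for every v ∈ T* and w ∈ V \ T*). Then T* solves the max–min problem: for every subset T ⊆ V with |T| = k, the minimum over all subsets U ⊆ T with |U| = c of ∑_{v ∈ U} r(v) is at most the minimum over all subsets U ⊆ T* with |U| = c of ∑_{v ∈ U} r(v). (Proposition 1: the PRP solution, which returns the top-k items by relevance, is also the max–min / conservative approximation of GPRP.) -/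
lemma sum_le_sum_of_pointwise {ι : Type*} (r : ι → ℝ) (A B : Finset ι)
    (hcard : A.card = B.card) (h : ∀ a ∈ A, ∀ b ∈ B, r a ≤ r b) :
    ∑ a ∈ A, r a ≤ ∑ b ∈ B, r b := by
  rcases B.eq_empty_or_nonempty with hB | hB
  · have : A = ∅ := Finset.card_eq_zero.mp (by simp [hcard, hB])
    simp [this, hB]
  · have h1 : ∑ a ∈ A, r a ≤ A.card • (B.inf' hB r) := by
      rw [← Finset.sum_const]
      exact Finset.sum_le_sum fun a ha => Finset.le_inf' hB r fun b hb => h a ha b hb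
    have h2 : B.card • (B.inf' hB r) ≤ ∑ b ∈ B, r b := by
      rw [← Finset.sum_const]
      exact Finset.sum_le_sum fun b hb => Finset.inf'_le r hb
    calc ∑ a ∈ A, r a ≤ A.card • (B.inf' hB r) := h1
      _ = B.card • (B.inf' hB r) := by rw [hcard]
      _ ≤ ∑ b ∈ B, r b := h2

/-- Proposition 1: a top-k set `T'` for `r` solves the max–min problem: for every
size-`k` subset `T` of `V`, the minimum over size-`c` subsets `U ⊆ T` of `∑_{v ∈ U} r v`
is at most the corresponding minimum over size-`c` subsets of `T'`. -/
theorem prp_is_max_min_solution {ι : Type*} [DecidableEq ι]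
    (V : Finset ι) (r : ι → ℝ) (c k : ℕ) (hck : c ≤ k) (hkV : k ≤ V.card)
    (T' : Finset ι) (hT'V : T' ⊆ V) (hT'card : T'.card = k)
    (htop : ∀ v ∈ T', ∀ w ∈ V \ T', r w ≤ r v)
    (T : Finset ι) (hTV : T ⊆ V) (hTcard : T.card = k) :
    (T.powersetCard c).inf'
        (Finset.powersetCard_nonempty.mpr (by rw [hTcard]; exact hck))
        (fun U => ∑ v ∈ U, r v) ≤
      (T'.powersetCard c).inf'
        (Finset.powersetCard_nonempty.mpr (by rw [hT'card]; exact hck))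
        (fun U => ∑ v ∈ U, r v) := by
  have hne' : (T'.powersetCard c).Nonempty :=
    Finset.powersetCard_nonempty.mpr (by rw [hT'card]; exact hck)
  obtain ⟨U', hU'mem, hU'eq⟩ := Finset.exists_mem_eq_inf' hne' (fun U => ∑ v ∈ U, r v)
  rw [Finset.mem_powersetCard] at hU'mem
  obtain ⟨hU'sub, hU'card⟩ := hU'mem
  rw [hU'eq]
  -- Build U ⊆ T of size c with sum ≤ sum U'
  -- U = (U' ∩ T) ∪ A, A ⊆ T \ T', |A| = |U' \ T|
  have hsplit : (U' ∩ T).card + (U' \ T).card = c := by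
    rw [Finset.card_inter_add_card_sdiff, hU'card]
  have hTT' : (U' \ T).card ≤ (T \ T').card := by
    have h1 : (U' \ T).card ≤ (T' \ T).card :=
      Finset.card_le_card (Finset.sdiff_subset_sdiff hU'sub le_rfl)
    have e1 := Finset.card_sdiff_add_card_inter T' T
    have e2 := Finset.card_sdiff_add_card_inter T T'
    rw [Finset.inter_comm] at e2
    omega
  obtain ⟨A, hAsub, hAcard⟩ := Finset.exists_subset_card_eq hTT'
  have hAdisj : Disjoint (U' ∩ T) A := by
    have : A ⊆ T \ T' := hAsub
    refine Finset.disjoint_left.mpr fun x hx hxA => ?_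
    have hxT' : x ∈ T' := hU'sub (Finset.mem_inter.mp hx).1
    exact (Finset.mem_sdiff.mp (this hxA)).2 hxT'
  set U := (U' ∩ T) ∪ A with hUdef
  have hUsub : U ⊆ T := by
    apply Finset.union_subset
    · exact Finset.inter_subset_right
    · exact hAsub.trans Finset.sdiff_subset
  have hUcard : U.card = c := by
    rw [hUdef, Finset.card_union_of_disjoint hAdisj, hAcard, hsplit]
  have hUmem : U ∈ T.powersetCard c := Finset.mem_powersetCard.mpr ⟨hUsub, hUcard⟩
  refine le_trans (Finset.inf'_le _ hUmem) ?_
  -- sum U ≤ sum U'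
  have hU'split : ∑ v ∈ U', r v = ∑ v ∈ U' ∩ T, r v + ∑ v ∈ U' \ T, r v :=
    (Finset.sum_inter_add_sum_sdiff U' T r).symm
  have hsumU : ∑ v ∈ U, r v = ∑ v ∈ U' ∩ T, r v + ∑ v ∈ A, r v :=
    Finset.sum_union hAdisj
  rw [hsumU, hU'split]
  apply add_le_add_right
  apply sum_le_sum_of_pointwise r A (U' \ T) hAcard
  intro a ha b hb
  have haV : a ∈ V \ T' := by
    have := hAsub ha
    rw [Finset.mem_sdiff] at this ⊢
    exact ⟨hTV this.1, this.2⟩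
  have hbT' : b ∈ T' := hU'sub (Finset.mem_sdiff.mp hb).1
  exact htop b hbT' a haV
end

section
/- For every ε with 0 < ε < 1 there exist functions r, p : Fin 4 → ℝ with 0 ≤ r(v) ≤ 1 and 0 ≤ p(v) ≤ 1 for all v (namely r = (1, 1, ε, 0) and p = (0.1, 0.2, 0.5, 0)), such that: (a) the set {0,1,2} is a top-3 set for r; (b) the unique maximizer of p on {0,1,2} is item 2, whose relevance is ε; and (c) there exists a subset T ⊆ Fin 4 with |T| = 3 (namely {0,1,3}) whose unique maximizer of p has relevance 1. Consequently, when the final stage deterministically exposes the single item of highest p from the size-3 set it receives, the final utility of the GPRP choice exceeds the final utility of the PRP choice (the top-3 set by r) by 1 − ε. (Proposition 2: the performance gap between PRP and GPRP can be arbitrarily close to c_4 = 1.) -/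
/-- Proposition 2: the performance gap between PRP and GPRP can be arbitrarily close
to `c₄ = 1`.  For every `0 < ε < 1` there are relevances `r = (1, 1, ε, 0)` and
selection scores `p = (0.1, 0.2, 0.5, 0)` on four items such that `{0,1,2}` is a top-3
set for `r`, the final stage (which deterministically exposes the item of highest `p`)
exposes item `2` of relevance `ε` from it, while another size-3 set (namely `{0,1,3}`)
leads to an exposed item of relevance `1`; the gap in final utility is `1 - ε`. -/
theorem prp_gprp_gap_can_approach_c4 :
    ∀ ε : ℝ, 0 < ε → ε < 1 →
      ∃ r p : Fin 4 → ℝ,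
        (r = ![1, 1, ε, 0] ∧ p = ![0.1, 0.2, 0.5, 0]) ∧
        (∀ v, 0 ≤ r v ∧ r v ≤ 1) ∧ (∀ v, 0 ≤ p v ∧ p v ≤ 1) ∧
        -- (a) {0,1,2} is a top-3 set for r
        (({0, 1, 2} : Finset (Fin 4)).card = 3 ∧
          ∀ v ∈ ({0, 1, 2} : Finset (Fin 4)),
            ∀ w ∈ (Finset.univ \ {0, 1, 2} : Finset (Fin 4)), r w ≤ r v) ∧
        -- (b) the unique maximizer of p on {0,1,2} is item 2, of relevance ε
        ((∀ v ∈ ({0, 1, 2} : Finset (Fin 4)), v ≠ 2 → p v < p 2) ∧ r 2 = ε) ∧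
        -- (c) a size-3 subset whose unique maximizer of p has relevance 1,
        -- so the final utility of GPRP exceeds that of PRP by 1 - ε
        (∃ T : Finset (Fin 4), T = ({0, 1, 3} : Finset (Fin 4)) ∧ T.card = 3 ∧
          ∃ v ∈ T, (∀ w ∈ T, w ≠ v → p w < p v) ∧ r v = 1 ∧ r v - r 2 = 1 - ε) := by
  intro ε hε0 hε1
  refine ⟨![1, 1, ε, 0], ![0.1, 0.2, 0.5, 0], ⟨rfl, rfl⟩, ?_, ?_, ⟨?_, ?_⟩, ⟨?_, ?_⟩, ?_⟩
  · intro v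
    fin_cases v <;> simp <;> constructor <;> linarith
  · intro v
    fin_cases v <;> norm_num
  · decide
  · intro v hv w hw
    fin_cases v <;> fin_cases w <;> simp_all <;> linarith
  · intro v hv hv2
    fin_cases v <;> simp_all <;> norm_num
  · simp
  · exact ⟨{0, 1, 3}, rfl, by decide, 1, by decide, by intro w hw hwne; fin_cases w <;> simp_all <;> norm_num, by norm_num, by norm_num; simp⟩
end
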